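/- Let f be an expansive homeomorphism of a compact metric space X. Then there is a metric D on X compatible with its topology such that for every A ≥ 1 there exist δ > 0 and a positive integer N such that for any x ∈ X and any y with D(f^{iN}(x), f^{iN}(y)) ≤ δ for all i ≥ 0, one has D(f^{-N}(x), f^{-N}(y)) ≥ A·D(x,y) and D(f^{iN}(x), f^{iN}(y)) ≤ A^{-i}·D(x,y) for all i ≥ 0. -/

import Mathlib

open Filter Topology

/-- The `n`-th iterate (`n ∈ ℤ`) of a homeomorphism `f`, as a map `X → X`. -/
def iterZ {X : Type*} [TopologicalSpace X] (f : X ≃ₜ X) (n : ℤ) : X → X :=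
  ⇑(f.toEquiv ^ n)

/-- The ω-limit set of `x`: limits of `f^{nᵢ}(x)` along strictly increasing
sequences `0 < n₁ < n₂ < ⋯`. -/
def posLimitSet {X : Type*} [TopologicalSpace X] (f : X ≃ₜ X) (x : X) : Set X :=
  {y | ∃ n : ℕ → ℕ, StrictMono n ∧ 0 < n 0 ∧
    Tendsto (fun i => iterZ f (n i) x) atTop (𝓝 y)}

/-- The α-limit set of `x`: limits of `f^{-nᵢ}(x)` along strictly increasing
sequences `0 < n₁ < n₂ < ⋯`. -/
def negLimitSet {X : Type*} [TopologicalSpace X] (f : X ≃ₜ X) (x : X) : Set X :=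
  {y | ∃ n : ℕ → ℕ, StrictMono n ∧ 0 < n 0 ∧
    Tendsto (fun i => iterZ f (-(n i : ℤ)) x) atTop (𝓝 y)}

/-- `x` is recurrent if it is positively or negatively recurrent. -/
def RecurrentPt {X : Type*} [TopologicalSpace X] (f : X ≃ₜ X) (x : X) : Prop :=
  x ∈ posLimitSet f x ∨ x ∈ negLimitSet f x

/-- `f` is expansive with expansivity constant `c`. -/
def ExpansiveWith {X : Type*} [MetricSpace X] (f : X ≃ₜ X) (c : ℝ) : Prop :=
  0 < c ∧ ∀ x y : X, x ≠ y → ∃ n : ℤ, c < dist (iterZ f n x) (iterZ f n y)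

/-- `f` is expansive. -/
def Expansive {X : Type*} [MetricSpace X] (f : X ≃ₜ X) : Prop :=
  ∃ c : ℝ, ExpansiveWith f c

/-- The full orbit `{fⁿ(x) : n ∈ ℤ}` of a point. -/
def fullOrbit {X : Type*} [TopologicalSpace X] (f : X ≃ₜ X) (x : X) : Set X :=
  Set.range fun n : ℤ => iterZ f n x

/-- `E` is a minimal set: nonempty, closed, invariant (`f(E) = E`), with no proper
nonempty closed invariant subset. -/
def IsMinimalSet {X : Type*} [TopologicalSpace X] (f : X ≃ₜ X) (E : Set X) : Prop :=
  E.Nonempty ∧ IsClosed E ∧ f '' E = E ∧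
    ∀ E' ⊆ E, E'.Nonempty → IsClosed E' → f '' E' = E' → E' = E

/-- `x` is almost periodic: the closure of its orbit is a minimal set. -/
def AlmostPeriodicPt {X : Type*} [TopologicalSpace X] (f : X ≃ₜ X) (x : X) : Prop :=
  IsMinimalSet f (closure (fullOrbit f x))

/-- The left shift `σ` on `ℤ → F`, as a homeomorphism. -/
def shiftH (F : Type*) [TopologicalSpace F] : (ℤ → F) ≃ₜ (ℤ → F) where
  toFun x n := x (n + 1)
  invFun x n := x (n - 1)
  left_inv x := by funext n; simp
  right_inv x := by funext n; simp
  continuous_toFun := continuous_pi fun n => continuous_apply (n + 1)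
  continuous_invFun := continuous_pi fun n => continuous_apply (n - 1)

/-- The `n`-th power (`n ∈ ℕ`) of a homeomorphism, as a homeomorphism. -/
def hpow {X : Type*} [TopologicalSpace X] (f : X ≃ₜ X) : ℕ → X ≃ₜ X
  | 0 => Homeomorph.refl X
  | n + 1 => (hpow f n).trans f

/-- The local stable set `W^s_ε(x)`. -/
def localStable {X : Type*} [MetricSpace X] (f : X ≃ₜ X) (ε : ℝ) (x : X) : Set X :=
  {y | ∀ n : ℕ, dist (iterZ f n x) (iterZ f n y) ≤ ε}

/-- The local unstable set `W^u_ε(x)`. -/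
def localUnstable {X : Type*} [MetricSpace X] (f : X ≃ₜ X) (ε : ℝ) (x : X) : Set X :=
  {y | ∀ n : ℕ, dist (iterZ f (-(n : ℤ)) x) (iterZ f (-(n : ℤ)) y) ≤ ε}

/-- The stable set `W^s(x)`. -/
def stableSet {X : Type*} [MetricSpace X] (f : X ≃ₜ X) (x : X) : Set X :=
  {y | Tendsto (fun n : ℕ => dist (iterZ f n x) (iterZ f n y)) atTop (𝓝 0)}

/-- The unstable set `W^u(x)`. -/
def unstableSet {X : Type*} [MetricSpace X] (f : X ≃ₜ X) (x : X) : Set X :=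
  {y | Tendsto (fun n : ℕ => dist (iterZ f (-(n : ℤ)) x) (iterZ f (-(n : ℤ)) y)) atTop (𝓝 0)}

/-- `f` has the pseudo orbit tracing property. -/
def POTP {X : Type*} [MetricSpace X] (f : X ≃ₜ X) : Prop :=
  ∀ ε > (0 : ℝ), ∃ δ > (0 : ℝ), ∀ u : ℤ → X,
    (∀ i : ℤ, dist (f (u i)) (u (i + 1)) < δ) →
    ∃ x : X, ∀ i : ℤ, dist (iterZ f i x) (u i) < ε

/-- `dD` is a metric on `X` compatible with the topology of `X`: it satisfies the metric
axioms and the open sets of `X` are exactly the sets that are open for `dD`. -/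
def IsCompatibleMetric {X : Type*} [TopologicalSpace X] (dD : X → X → ℝ) : Prop :=
  (∀ x y : X, dD x y = 0 ↔ x = y) ∧
  (∀ x y : X, dD x y = dD y x) ∧
  (∀ x y z : X, dD x z ≤ dD x y + dD y z) ∧
  (∀ s : Set X, IsOpen s ↔ ∀ x ∈ s, ∃ ε > (0 : ℝ), {y : X | dD x y < ε} ⊆ s)


/-! ### Auxiliary machinery for the proof of `stmt_16` (Fathi's hyperbolic metric) -/

section Stmt16Aux

set_option linter.unusedSectionVars false
set_option maxHeartbeats 2000000

namespace Stmt16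

section Chain
open Finset
variable {X : Type*} (ρ : X → X → ℝ)

/-- The set of sums over chains from `x` to `y`. -/
def chainSet (x y : X) : Set ℝ :=
  {r | ∃ (n : ℕ) (p : ℕ → X), p 0 = x ∧ p n = y ∧
    r = ∑ i ∈ Finset.range n, ρ (p i) (p (i+1))}

/-- The chain metric. -/
noncomputable def chainD (x y : X) : ℝ := sInf (chainSet ρ x y)

variable (hnn : ∀ a b : X, 0 ≤ ρ a b) (hsymm : ∀ a b : X, ρ a b = ρ b a)
  (hself : ∀ a : X, ρ a a = 0) (hid : ∀ a b : X, ρ a b = 0 → a = b)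
  (hquasi : ∀ a b c : X, ρ a c ≤ (4/3) * max (ρ a b) (ρ b c))

lemma rho_mem_chainSet (x y : X) : ρ x y ∈ chainSet ρ x y := by
  refine ⟨1, fun i => if i = 0 then x else y, by simp, by simp, ?_⟩
  simp

lemma chainSet_nonempty (x y : X) : (chainSet ρ x y).Nonempty :=
  ⟨_, rho_mem_chainSet ρ x y⟩

include hnn in
lemma chainSet_bddBelow (x y : X) : BddBelow (chainSet ρ x y) := by
  refine ⟨0, fun r hr => ?_⟩
  obtain ⟨n, p, _, _, rfl⟩ := hr
  exact Finset.sum_nonneg fun i _ => hnn _ _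

include hnn in
lemma chainD_le_rho (x y : X) : chainD ρ x y ≤ ρ x y :=
  csInf_le (chainSet_bddBelow ρ hnn x y) (rho_mem_chainSet ρ x y)

include hnn in
lemma chainD_nonneg (x y : X) : 0 ≤ chainD ρ x y :=
  le_csInf (chainSet_nonempty ρ x y) fun r hr => by
    obtain ⟨n, p, _, _, rfl⟩ := hr
    exact Finset.sum_nonneg fun i _ => hnn _ _

include hnn hself hid hquasi in
/-- Frink's chain lemma, with quasi-constant 4/3 and loss factor 2. -/
lemma frink (n : ℕ) : ∀ p : ℕ → X,
    ρ (p 0) (p n) ≤ 2 * ∑ i ∈ Finset.range n, ρ (p i) (p (i+1)) := by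
  induction n using Nat.strong_induction_on with
  | _ n IH =>
    intro p
    rcases Nat.eq_zero_or_pos n with rfl | hn
    · simp [hself]
    set g : ℕ → ℝ := fun i => ρ (p i) (p (i+1)) with hg
    set S := ∑ i ∈ Finset.range n, g i with hSdef
    have hS : 0 ≤ S := Finset.sum_nonneg fun i _ => hnn _ _
    set P : ℕ → Prop := fun j => ∑ i ∈ Finset.range j, g i ≤ S/2 with hP
    have hP0 : P 0 := by simp [hP]; linarith
    classical
    set m := Nat.findGreatest P n with hm
    have hPm : P m := Nat.findGreatest_spec (Nat.zero_le n) hP0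
    have hmn : m ≤ n := Nat.findGreatest_le n
    rcases eq_or_lt_of_le hmn with heq | hlt
    · -- m = n : then S = 0 and all points coincide
      have hS0 : S = 0 := by
        have hPn : P n := heq ▸ hPm
        rw [hP] at hPn
        simp only [← hSdef] at hPn
        linarith
      have hall : ∀ i ∈ Finset.range n, g i = 0 := by
        rw [← Finset.sum_eq_zero_iff_of_nonneg (fun i _ => hnn _ _)]
        exact hS0 ▸ hSdef.symm
      have heq : ∀ j, j ≤ n → p j = p 0 := by
        intro j hj
        induction j with
        | zero => rfl
        | succ i ihi =>
          have := hid _ _ (hall i (Finset.mem_range.mpr (by omega)))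
          rw [← this, ihi (by omega)]
      rw [heq n le_rfl, hself, hS0]
      norm_num
    · -- m < n
      have hgt : ¬ P (m+1) := Nat.findGreatest_is_greatest (n := n) (k := m+1) (by omega) (by omega)
      have hA1 : ∑ i ∈ Finset.range m, g i ≤ S/2 := hPm
      have hA2 : ∑ i ∈ Finset.Ico (m+1) n, g i ≤ S/2 := by
        have hsub := Finset.sum_Ico_eq_sub g (by omega : m+1 ≤ n)
        rw [hP] at hgt
        push_neg at hgt
        rw [hsub]
        linarith [hSdef.le, hSdef.ge]
      have hmid : g m ≤ S := by
        rw [hSdef]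
        exact Finset.single_le_sum (fun i _ => hnn (p i) (p (i+1)))
          (Finset.mem_range.mpr hlt)
      -- left piece
      have hleft : ρ (p 0) (p m) ≤ S := by
        calc ρ (p 0) (p m) ≤ 2 * ∑ i ∈ Finset.range m, ρ (p i) (p (i+1)) := IH m hlt p
          _ ≤ 2 * (S/2) := by rw [← hg]; linarith
          _ = S := by ring
      -- right piece
      have e3 : ∑ i ∈ Finset.range (n - (m+1)), ρ (p (m+1+i)) (p (m+1+(i+1)))
          = ∑ i ∈ Finset.Ico (m+1) n, g i := by
        rw [Finset.sum_Ico_eq_sum_range]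
        apply Finset.sum_congr rfl
        intro i _
        rw [hg]
        congr 2 <;> omega
      have hright : ρ (p (m+1)) (p n) ≤ S := by
        have hq := IH (n - (m+1)) (by omega) (fun i => p (m+1+i))
        have e2 : m+1+(n-(m+1)) = n := by omega
        simp only [Nat.add_zero, e2] at hq
        calc ρ (p (m+1)) (p n)
            ≤ 2 * ∑ i ∈ Finset.range (n - (m+1)), ρ (p (m+1+i)) (p (m+1+(i+1))) := hq
          _ = 2 * ∑ i ∈ Finset.Ico (m+1) n, g i := by rw [e3]
          _ ≤ 2 * (S/2) := by linarith
          _ = S := by ring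
      have hstep1 : ρ (p m) (p n) ≤ (4/3) * S := by
        calc ρ (p m) (p n) ≤ (4/3) * max (ρ (p m) (p (m+1))) (ρ (p (m+1)) (p n)) :=
              hquasi _ _ _
          _ ≤ (4/3) * S := by
              have := max_le (hmid) hright
              linarith
      calc ρ (p 0) (p n) ≤ (4/3) * max (ρ (p 0) (p m)) (ρ (p m) (p n)) := hquasi _ _ _
        _ ≤ (4/3) * ((4/3) * S) := by
            have h1 : max (ρ (p 0) (p m)) (ρ (p m) (p n)) ≤ (4/3) * S :=
              max_le (by linarith) hstep1
            linarith
        _ ≤ 2 * S := by linarith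

include hnn hself hid hquasi in
lemma rho_le_two_chainD (x y : X) : ρ x y ≤ 2 * chainD ρ x y := by
  have h2 : ρ x y / 2 ≤ chainD ρ x y := by
    apply le_csInf (chainSet_nonempty ρ x y)
    rintro r ⟨n, p, hp0, hpn, rfl⟩
    have := frink ρ hnn hself hid hquasi n p
    rw [hp0, hpn] at this
    linarith
  linarith

include hsymm in
lemma chainSet_symm_subset (x y : X) : chainSet ρ x y ⊆ chainSet ρ y x := by
  rintro r ⟨n, p, hp0, hpn, rfl⟩
  refine ⟨n, fun i => p (n - i), by simpa using hpn, by simpa using hp0, ?_⟩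
  rw [← Finset.sum_range_reflect]
  apply Finset.sum_congr rfl
  intro i hi
  rw [Finset.mem_range] at hi
  rw [hsymm]
  congr 2 <;> omega

include hsymm in
lemma chainD_symm (x y : X) : chainD ρ x y = chainD ρ y x := by
  unfold chainD
  congr 1
  exact le_antisymm (chainSet_symm_subset ρ hsymm x y) (chainSet_symm_subset ρ hsymm y x)

include hnn in
lemma chainSet_add_mem {x y z : X} {r1 r2 : ℝ} (h1 : r1 ∈ chainSet ρ x y)
    (h2 : r2 ∈ chainSet ρ y z) : r1 + r2 ∈ chainSet ρ x z := by
  obtain ⟨n, p, hp0, hpn, rfl⟩ := h1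
  obtain ⟨nq, q, hq0, hqn, rfl⟩ := h2
  classical
  refine ⟨n + nq, fun i => if i < n then p i else q (i - n), ?_, ?_, ?_⟩
  · rcases Nat.eq_zero_or_pos n with rfl | hn
    · simp only [Nat.lt_irrefl, if_false, Nat.sub_zero]
      rw [hq0, ← hpn]
      exact hp0
    · simpa [hn] using hp0
  · have : ¬ (n + nq < n) := by omega
    simp only [this, if_false]
    simpa using hqn
  · rw [Finset.sum_range_add]
    congr 1
    · apply Finset.sum_congr rfl
      intro i hi
      rw [Finset.mem_range] at hi
      simp only [hi, if_true]
      rcases Nat.lt_or_ge (i+1) n with h | h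
      · simp [h]
      · have hin : i + 1 = n := by omega
        have : ¬ (i + 1 < n) := by omega
        simp only [this, if_false, hin, Nat.sub_self, hq0, hpn, ite_self]
    · apply Finset.sum_congr rfl
      intro i _
      have h1 : ¬ (n + i < n) := by omega
      have h2 : ¬ (n + i + 1 < n) := by omega
      simp only [h1, h2, if_false]
      rw [show n + i - n = i from by omega, show n + i + 1 - n = i + 1 from by omega]

include hnn in
lemma chainD_triangle (x y z : X) : chainD ρ x z ≤ chainD ρ x y + chainD ρ y z := by
  have key : ∀ r1 ∈ chainSet ρ x y, ∀ r2 ∈ chainSet ρ y z, chainD ρ x z ≤ r1 + r2 :=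
    fun r1 h1 r2 h2 => csInf_le (chainSet_bddBelow ρ hnn x z) (chainSet_add_mem ρ hnn h1 h2)
  have step : ∀ r1 ∈ chainSet ρ x y, chainD ρ x z ≤ r1 + chainD ρ y z := by
    intro r1 h1
    have : chainD ρ x z - r1 ≤ chainD ρ y z := by
      apply le_csInf (chainSet_nonempty ρ y z)
      intro r2 h2
      linarith [key r1 h1 r2 h2]
    linarith
  have : chainD ρ x z - chainD ρ y z ≤ chainD ρ x y := by
    apply le_csInf (chainSet_nonempty ρ x y)
    intro r1 h1
    linarith [step r1 h1]
  linarith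

end Chain

section Dyn
variable {X : Type*} [MetricSpace X] [CompactSpace X]

lemma iterZ_add (f : X ≃ₜ X) (a b : ℤ) (x : X) : iterZ f a (iterZ f b x) = iterZ f (a+b) x := by
  simp [iterZ, ← Equiv.Perm.mul_apply, ← zpow_add]

lemma iterZ_zero (f : X ≃ₜ X) (x : X) : iterZ f 0 x = x := rfl

lemma iterZ_inj (f : X ≃ₜ X) (n : ℤ) : Function.Injective (iterZ f n) :=
  Equiv.injective _

lemma continuous_iterZ (f : X ≃ₜ X) (n : ℤ) : Continuous (iterZ f n) := by
  induction n using Int.induction_on with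
  | zero => simpa [iterZ] using continuous_id
  | succ k ih =>
    have : iterZ f (k+1) = fun x => iterZ f k (f x) := by
      funext x
      rw [show (f : X → X) x = iterZ f 1 x from by simp [iterZ], iterZ_add]
    rw [this]; exact ih.comp f.continuous
  | pred k ih =>
    have : iterZ f (-k-1) = fun x => iterZ f (-k) (f.symm x) := by
      funext x
      have : (f.symm : X → X) x = iterZ f (-1) x := by
        simp [iterZ, zpow_neg, Equiv.Perm.inv_def]
      rw [this, iterZ_add]; ring_nf
    rw [this]; exact ih.comp f.symm.continuous

/-- `win f c n x y`: the orbits of `x` and `y` stay `c`-close on the window `[-n, n]`. -/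
def win (f : X ≃ₜ X) (c : ℝ) (n : ℕ) (x y : X) : Prop :=
  ∀ j : ℤ, |j| ≤ (n : ℤ) → dist (iterZ f j x) (iterZ f j y) ≤ c

lemma win_mono {f : X ≃ₜ X} {c : ℝ} {n m : ℕ} (h : m ≤ n) {x y : X}
    (hw : win f c n x y) : win f c m x y :=
  fun j hj => hw j (hj.trans (by exact_mod_cast h))

/-- Uniform expansivity. -/
lemma unif_exp (f : X ≃ₜ X) {c : ℝ} (hc : ExpansiveWith f c) :
    ∀ ε > (0:ℝ), ∃ k : ℕ, ∀ x y : X, win f c k x y → dist x y ≤ ε := by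
  intro ε hε
  set K : Set (X × X) := {p | ε ≤ dist p.1 p.2} with hK
  have hKc : IsCompact K := by
    apply IsClosed.isCompact
    exact isClosed_le continuous_const (continuous_dist.comp (continuous_fst.prodMk continuous_snd))
  set Z : ℕ → Set (X × X) := fun n => {p | win f c n p.1 p.2} with hZ
  have hZc : ∀ n, IsClosed (Z n) := by
    intro n
    have : Z n = ⋂ (j : ℤ) (_ : |j| ≤ (n:ℤ)),
        {p : X × X | dist (iterZ f j p.1) (iterZ f j p.2) ≤ c} := by
      ext p; simp [hZ, win, Set.mem_iInter]
    rw [this]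
    exact isClosed_iInter fun j => isClosed_iInter fun _ =>
      isClosed_le (Continuous.dist ((continuous_iterZ f j).comp continuous_fst)
        ((continuous_iterZ f j).comp continuous_snd)) continuous_const
  have hempty : (K ∩ ⋂ n, Z n) = ∅ := by
    ext p
    simp only [Set.mem_inter_iff, Set.mem_iInter, Set.mem_empty_iff_false, iff_false, not_and]
    intro hpK hall
    have hne : p.1 ≠ p.2 := by
      intro h
      rw [hK] at hpK
      simp only [Set.mem_setOf_eq, h, dist_self] at hpK
      linarith
    obtain ⟨j, hj⟩ := hc.2 p.1 p.2 hne
    have := hall j.natAbs j (by rw [Int.abs_eq_natAbs])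
    linarith
  obtain ⟨t, ht⟩ := hKc.elim_finite_subfamily_closed Z hZc hempty
  rcases t.eq_empty_or_nonempty with rfl | hne
  · refine ⟨0, fun x y hw => ?_⟩
    by_contra h
    have : (x, y) ∈ K ∩ ⋂ n ∈ (∅ : Finset ℕ), Z n := by
      simp [hK]; linarith
    rw [ht] at this; exact this
  · refine ⟨t.max' hne, fun x y hw => ?_⟩
    by_contra h
    have : (x, y) ∈ K ∩ ⋂ n ∈ t, Z n := by
      refine ⟨by simp [hK]; linarith, ?_⟩
      simp only [Set.mem_iInter]
      intro n hn
      exact win_mono (t.le_max' n hn) hw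
    rw [ht] at this; exact this

/-- Uniform continuity of all the iterates in a finite window. -/
lemma unif_cont (f : X ≃ₜ X) (n : ℕ) {c : ℝ} (hc : 0 < c) :
    ∃ δ > (0:ℝ), ∀ x y : X, dist x y < δ → win f c n x y := by
  have key : ∀ j : ℤ, ∃ δ > (0:ℝ), ∀ x y : X, dist x y < δ →
      dist (iterZ f j x) (iterZ f j y) ≤ c := by
    intro j
    have := CompactSpace.uniformContinuous_of_continuous (continuous_iterZ f j)
    rw [Metric.uniformContinuous_iff] at this
    obtain ⟨δ, hδ, h⟩ := this c hc
    exact ⟨δ, hδ, fun x y hxy => (h hxy).le⟩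
  choose δf hδf hf using key
  have hne : (Finset.Icc (-(n:ℤ)) n).Nonempty := by
    refine ⟨0, ?_⟩; simp
  refine ⟨(Finset.Icc (-(n:ℤ)) n).inf' hne δf, ?_, ?_⟩
  · exact (Finset.lt_inf'_iff hne).mpr fun j _ => hδf j
  · intro x y hxy j hj
    apply hf j x y
    apply lt_of_lt_of_le hxy
    apply Finset.inf'_le
    rw [Finset.mem_Icc, abs_le] at *
    exact hj

/-- The first `n` such that the window property fails. -/
noncomputable def mex (f : X ≃ₜ X) (c : ℝ) (x y : X) : ℕ :=
  sInf {n | ¬ win f c n x y}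

lemma mex_symm (f : X ≃ₜ X) (c : ℝ) (x y : X) : mex f c x y = mex f c y x := by
  unfold mex
  congr 1
  ext n
  simp only [Set.mem_setOf_eq, not_iff_not]
  constructor <;> exact fun h j hj => by rw [dist_comm]; exact h j hj

lemma bad_nonempty {f : X ≃ₜ X} {c : ℝ} (hc : ExpansiveWith f c) {x y : X} (h : x ≠ y) :
    {n | ¬ win f c n x y}.Nonempty := by
  obtain ⟨j, hj⟩ := hc.2 x y h
  exact ⟨j.natAbs, fun hw => absurd (hw j (by rw [Int.abs_eq_natAbs])) (by linarith)⟩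

lemma win_of_lt_mex {f : X ≃ₜ X} {c : ℝ} {x y : X} {n : ℕ} (h : n < mex f c x y) :
    win f c n x y := by
  by_contra hw
  have := Nat.sInf_le (show n ∈ {n | ¬ win f c n x y} from hw)
  unfold mex at h
  omega

lemma not_win_mex {f : X ≃ₜ X} {c : ℝ} (hc : ExpansiveWith f c) {x y : X} (h : x ≠ y) :
    ¬ win f c (mex f c x y) x y := Nat.sInf_mem (bad_nonempty hc h)

lemma lt_mex_of_win {f : X ≃ₜ X} {c : ℝ} (hc : ExpansiveWith f c) {x y : X} (h : x ≠ y)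
    {n : ℕ} (hw : win f c n x y) : n < mex f c x y := by
  by_contra hn
  push_neg at hn
  exact not_win_mex hc h (fun j hj => hw j (hj.trans (by exact_mod_cast hn)))

open Classical in
/-- The quasi-metric. -/
noncomputable def rho (f : X ≃ₜ X) (c : ℝ) (k : ℕ) (x y : X) : ℝ :=
  if x = y then 0 else (3/4 : ℝ) ^ (mex f c x y / k)

lemma rho_nonneg (f : X ≃ₜ X) (c : ℝ) (k : ℕ) (x y : X) : 0 ≤ rho f c k x y := by
  unfold rho; split
  · exact le_refl 0
  · positivity

lemma rho_self (f : X ≃ₜ X) (c : ℝ) (k : ℕ) (x : X) : rho f c k x x = 0 := by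
  simp [rho]

lemma rho_le_one (f : X ≃ₜ X) (c : ℝ) (k : ℕ) (x y : X) : rho f c k x y ≤ 1 := by
  unfold rho; split
  · norm_num
  · exact pow_le_one₀ (by norm_num) (by norm_num)

lemma rho_pos {f : X ≃ₜ X} {c : ℝ} {k : ℕ} {x y : X} (h : x ≠ y) : 0 < rho f c k x y := by
  unfold rho; rw [if_neg h]; positivity

lemma rho_eq_zero_iff {f : X ≃ₜ X} {c : ℝ} {k : ℕ} {x y : X} :
    rho f c k x y = 0 ↔ x = y := by
  constructor
  · intro h
    by_contra hne
    exact absurd h (ne_of_gt (rho_pos hne))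
  · intro h; rw [h]; exact rho_self f c k y

lemma rho_symm (f : X ≃ₜ X) (c : ℝ) (k : ℕ) (x y : X) : rho f c k x y = rho f c k y x := by
  unfold rho
  rw [mex_symm]
  by_cases h : x = y
  · simp [h]
  · rw [if_neg h, if_neg (Ne.symm h)]

lemma rho_ne (f : X ≃ₜ X) (c : ℝ) (k : ℕ) {x y : X} (h : x ≠ y) :
    rho f c k x y = (3/4 : ℝ) ^ (mex f c x y / k) := if_neg h

/-- Window composition: the key consequence of uniform expansivity. -/
lemma mex_min_le {f : X ≃ₜ X} {c : ℝ} {k : ℕ} (hc : ExpansiveWith f c)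
    (hk : ∀ x y : X, win f c k x y → dist x y ≤ c/2) (x y z : X) (hxz : x ≠ z)
    {n : ℕ} (hn : n + k < min (mex f c x y) (mex f c y z)) : n < mex f c x z := by
  apply lt_mex_of_win hc hxz
  intro j hj
  have half : ∀ u v : X, n + k < mex f c u v → dist (iterZ f j u) (iterZ f j v) ≤ c/2 := by
    intro u v huv
    apply hk
    intro i hi
    rw [iterZ_add, iterZ_add]
    have habs : |i + j| ≤ ((n + k : ℕ) : ℤ) := by
      have h1 := abs_le.mp hi
      have h2 := abs_le.mp hj
      rw [abs_le]
      push_cast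
      omega
    exact win_of_lt_mex huv (i + j) habs
  calc dist (iterZ f j x) (iterZ f j z)
      ≤ dist (iterZ f j x) (iterZ f j y) + dist (iterZ f j y) (iterZ f j z) := dist_triangle _ _ _
    _ ≤ c/2 + c/2 := add_le_add (half x y (hn.trans_le (min_le_left _ _)))
        (half y z (hn.trans_le (min_le_right _ _)))
    _ = c := by ring

/-- Quasi-triangle inequality with constant 4/3. -/
lemma rho_quasi {f : X ≃ₜ X} {c : ℝ} {k : ℕ} (hc : ExpansiveWith f c)
    (hk : ∀ x y : X, win f c k x y → dist x y ≤ c/2) (hk1 : 1 ≤ k) (x y z : X) :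
    rho f c k x z ≤ (4/3) * max (rho f c k x y) (rho f c k y z) := by
  have hmax0 : 0 ≤ max (rho f c k x y) (rho f c k y z) :=
    le_max_of_le_left (rho_nonneg _ _ _ _ _)
  by_cases hxz : x = z
  · rw [hxz, show rho f c k z z = 0 from by simp [rho]]
    linarith [le_max_left (rho f c k z y) (rho f c k y z), rho_nonneg f c k z y]
  by_cases hxy : x = y
  · rw [hxy]
    linarith [le_max_right (rho f c k y y) (rho f c k y z), le_max_left (rho f c k y y) (rho f c k y z), rho_nonneg f c k y y]
  by_cases hyz : y = z
  · rw [← hyz] at hxz ⊢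
    linarith [le_max_left (rho f c k x y) (rho f c k y y), rho_nonneg f c k x y]
  -- all distinct
  set a := mex f c x y
  set b := mex f c y z
  set μ := min a b with hμ
  have hpowmono : ∀ s t : ℕ, s ≤ t → (3/4:ℝ)^t ≤ (3/4:ℝ)^s := fun s t h =>
    pow_le_pow_of_le_one (by norm_num) (by norm_num) h
  have hmaxrw : max (rho f c k x y) (rho f c k y z) = (3/4 : ℝ) ^ (μ / k) := by
    rw [rho_ne f c k hxy, rho_ne f c k hyz]
    rcases le_total a b with h | h
    · rw [max_eq_left (hpowmono _ _ (Nat.div_le_div_right h)), hμ, min_eq_left h]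
    · rw [max_eq_right (hpowmono _ _ (Nat.div_le_div_right h)), hμ, min_eq_right h]
  rw [hmaxrw, rho_ne f c k hxz]
  by_cases hμk : μ < k
  · rw [Nat.div_eq_of_lt hμk]
    calc (3/4 : ℝ) ^ (mex f c x z / k) ≤ 1 := pow_le_one₀ (by norm_num) (by norm_num)
      _ ≤ (4/3) * (3/4:ℝ)^0 := by norm_num
  · push_neg at hμk
    have hm : μ - k ≤ mex f c x z := by
      rcases Nat.eq_zero_or_pos (μ - k) with h0 | hpos
      · omega
      · have := mex_min_le hc hk x y z hxz (n := μ - k - 1) (by omega)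
        omega
    have hdiv : μ / k - 1 ≤ mex f c x z / k := by
      have h2 : μ / k ≤ (μ - k) / k + 1 := by
        have hle : μ ≤ (μ - k) + k := by omega
        calc μ / k ≤ ((μ - k) + k) / k := Nat.div_le_div_right hle
          _ = (μ - k)/k + 1 := Nat.add_div_right _ (by omega)
      have h3 := Nat.div_le_div_right (c := k) hm
      exact le_trans (Nat.sub_le_of_le_add h2) h3
    have hq1 : 1 ≤ μ / k := (Nat.one_le_div_iff (by omega)).mpr hμk
    calc (3/4 : ℝ) ^ (mex f c x z / k) ≤ (3/4 : ℝ) ^ (μ / k - 1) :=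
          hpowmono _ _ hdiv
      _ = (4/3) * (3/4 : ℝ) ^ (μ / k) := by
          have hrw : (3/4:ℝ) ^ (μ/k) = (3/4:ℝ)^(μ/k - 1) * (3/4) := by
            rw [← pow_succ]
            congr 1
            omega
          rw [hrw]; ring

/-- The expansion lemma: shifting by `M` forward or backward, one of the two windows
shrinks by at least `M`. -/
lemma mex_shift {f : X ≃ₜ X} {c : ℝ} (hc : ExpansiveWith f c) {x y : X} (hxy : x ≠ y)
    {M : ℕ} (h2M : 2 * M ≤ mex f c x y) :
    min (mex f c (iterZ f (M:ℤ) x) (iterZ f (M:ℤ) y))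
        (mex f c (iterZ f (-(M:ℤ)) x) (iterZ f (-(M:ℤ)) y)) ≤ mex f c x y - M := by
  set m := mex f c x y with hm
  by_contra hcon
  push_neg at hcon
  have hfwd : win f c (m - M) (iterZ f (M:ℤ) x) (iterZ f (M:ℤ) y) :=
    win_of_lt_mex (lt_of_lt_of_le hcon (min_le_left _ _))
  have hbwd : win f c (m - M) (iterZ f (-(M:ℤ)) x) (iterZ f (-(M:ℤ)) y) :=
    win_of_lt_mex (lt_of_lt_of_le hcon (min_le_right _ _))
  have hMm : M ≤ m := by omega
  have hwm : win f c m x y := by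
    intro i hi
    rw [abs_le] at hi
    by_cases hcase : 2 * (M:ℤ) - m ≤ i
    · have := hfwd (i - M) (by rw [abs_le]; push_cast; omega)
      rwa [iterZ_add, iterZ_add, sub_add_cancel] at this
    · push_neg at hcase
      have := hbwd (i + M) (by rw [abs_le]; push_cast; omega)
      rwa [iterZ_add, iterZ_add, add_neg_cancel_right] at this
  exact absurd (lt_mex_of_win hc hxy hwm) (by omega)

end Dyn
end Stmt16
end Stmt16Aux

/-- For an expansive homeomorphism there is a compatible metric `D`
such that for every `A ≥ 1` there are `δ > 0` and `N ≥ 1` with: whenever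
`D(f^{iN}x, f^{iN}y) ≤ δ` for all `i ≥ 0`, one has `D(f^{-N}x, f^{-N}y) ≥ A·D(x,y)` and
`D(f^{iN}x, f^{iN}y) ≤ A^{-i}·D(x,y)` for all `i ≥ 0`. -/
theorem stmt_16 {X : Type*} [MetricSpace X] [CompactSpace X] (f : X ≃ₜ X)
    (hexp : Expansive f) :
    ∃ dD : X → X → ℝ, IsCompatibleMetric dD ∧
      ∀ A : ℝ, 1 ≤ A → ∃ δ > (0 : ℝ), ∃ N : ℕ, 0 < N ∧
        ∀ x y : X,
          (∀ i : ℕ, dD (iterZ f (i * N) x) (iterZ f (i * N) y) ≤ δ) →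
          A * dD x y ≤ dD (iterZ f (-(N : ℤ)) x) (iterZ f (-(N : ℤ)) y) ∧
          ∀ i : ℕ, dD (iterZ f (i * N) x) (iterZ f (i * N) y) ≤ (A ^ i)⁻¹ * dD x y := by
  classical
  open Stmt16 in
  obtain ⟨c, hc⟩ := hexp
  obtain ⟨k₀, hk₀⟩ := unif_exp f hc (c/2) (by linarith [hc.1])
  set k := max k₀ 1 with hkdef
  have hk1 : 1 ≤ k := le_max_right _ _
  have hkpos : 0 < k := hk1
  have hk : ∀ x y : X, win f c k x y → dist x y ≤ c/2 :=
    fun x y hw => hk₀ x y (win_mono (le_max_left _ _) hw)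
  set ρ : X → X → ℝ := rho f c k with hρdef
  have hnn : ∀ a b : X, 0 ≤ ρ a b := rho_nonneg f c k
  have hsymm : ∀ a b : X, ρ a b = ρ b a := rho_symm f c k
  have hself : ∀ a : X, ρ a a = 0 := rho_self f c k
  have hid : ∀ a b : X, ρ a b = 0 → a = b := fun a b h => rho_eq_zero_iff.mp h
  have hquasi : ∀ a b d : X, ρ a d ≤ (4/3) * max (ρ a b) (ρ b d) :=
    fun a b d => rho_quasi hc hk hk1 a b d
  set D : X → X → ℝ := chainD ρ with hDdef
  have hDle : ∀ x y, D x y ≤ ρ x y := chainD_le_rho ρ hnn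
  have hD2 : ∀ x y, ρ x y ≤ 2 * D x y := rho_le_two_chainD ρ hnn hself hid hquasi
  have hDnn : ∀ x y, 0 ≤ D x y := chainD_nonneg ρ hnn
  have hDsymm : ∀ x y, D x y = D y x := chainD_symm ρ hsymm
  have hDtri : ∀ x y z, D x z ≤ D x y + D y z := chainD_triangle ρ hnn
  have hDzero : ∀ x y : X, D x y = 0 ↔ x = y := by
    intro x y
    constructor
    · intro h
      apply hid
      have h1 := hD2 x y
      have h2 := hnn x y
      linarith
    · rintro rfl
      have h1 := hDle x x
      have h2 := hDnn x x
      rw [hself x] at h1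
      linarith
  -- topology control, direction 1
  have T1 : ∀ ε > (0:ℝ), ∃ η > (0:ℝ), ∀ x y : X, D x y < η → dist x y ≤ ε := by
    intro ε hε
    obtain ⟨kε, hkε⟩ := unif_exp f hc ε hε
    refine ⟨(3/4:ℝ)^kε / 2, by positivity, fun x y hDxy => ?_⟩
    by_cases hxy : x = y
    · rw [hxy, dist_self]; linarith
    · have hρlt : ρ x y < (3/4:ℝ)^kε := by
        have := hD2 x y; linarith
      rw [hρdef, rho_ne f c k hxy] at hρlt
      have hdiv : kε < mex f c x y / k := by
        by_contra hcon
        push_neg at hcon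
        have := pow_le_pow_of_le_one (by norm_num : (0:ℝ) ≤ 3/4) (by norm_num) hcon
        linarith
      have hlt : kε < mex f c x y :=
        calc kε < mex f c x y / k := hdiv
          _ ≤ (mex f c x y / k) * k := Nat.le_mul_of_pos_right _ hkpos
          _ ≤ mex f c x y := Nat.div_mul_le_self _ _
      exact hkε x y (win_of_lt_mex hlt)
  -- topology control, direction 2
  have T2 : ∀ ε > (0:ℝ), ∃ δ > (0:ℝ), ∀ x y : X, dist x y < δ → D x y < ε := by
    intro ε hε
    obtain ⟨t, ht⟩ := exists_pow_lt_of_lt_one hε (by norm_num : (3/4:ℝ) < 1)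
    obtain ⟨δ, hδ, hwin⟩ := unif_cont f (k*t) hc.1
    refine ⟨δ, hδ, fun x y hxy => ?_⟩
    by_cases hxyeq : x = y
    · rw [hxyeq, (hDzero y y).mpr rfl]; exact hε
    · have hlt : k*t < mex f c x y := lt_mex_of_win hc hxyeq (hwin x y hxy)
      have hdiv : t ≤ mex f c x y / k := by
        rw [Nat.le_div_iff_mul_le hkpos]
        calc t * k = k * t := Nat.mul_comm t k
          _ ≤ mex f c x y := hlt.le
      calc D x y ≤ ρ x y := hDle x y
        _ = (3/4:ℝ)^(mex f c x y / k) := by rw [hρdef, rho_ne f c k hxyeq]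
        _ ≤ (3/4:ℝ)^t := pow_le_pow_of_le_one (by norm_num) (by norm_num) hdiv
        _ < ε := ht
  have hcompat : IsCompatibleMetric D := by
    refine ⟨hDzero, hDsymm, hDtri, ?_⟩
    intro s
    constructor
    · intro hs x hxs
      rw [Metric.isOpen_iff] at hs
      obtain ⟨r, hr, hball⟩ := hs x hxs
      obtain ⟨η, hη, hT1⟩ := T1 (r/2) (by linarith)
      refine ⟨η, hη, fun y hy => ?_⟩
      apply hball
      rw [Metric.mem_ball]
      have hd := hT1 x y hy
      calc dist y x = dist x y := dist_comm _ _
        _ ≤ r/2 := hd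
        _ < r := by linarith
    · intro h
      rw [Metric.isOpen_iff]
      intro x hxs
      obtain ⟨ε, hε, hsub⟩ := h x hxs
      obtain ⟨δ, hδ, hT2⟩ := T2 ε hε
      refine ⟨δ, hδ, fun y hy => ?_⟩
      apply hsub
      rw [Set.mem_setOf_eq]
      exact hT2 x y (by rw [dist_comm]; exact Metric.mem_ball.mp hy)
  -- hyperbolicity of D
  have hyp : ∀ (s : ℕ) (u v : X), D u v ≤ (3/4:ℝ)^(2*s)/2 →
      (4/3:ℝ)^s / 2 * D u v ≤
        max (D (iterZ f ((s*k : ℕ) : ℤ) u) (iterZ f ((s*k : ℕ) : ℤ) v))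
            (D (iterZ f (-((s*k : ℕ) : ℤ)) u) (iterZ f (-((s*k : ℕ) : ℤ)) v)) := by
    intro s u v hsmall
    by_cases huv : u = v
    · rw [huv, (hDzero v v).mpr rfl, mul_zero]
      exact le_max_of_le_left (hDnn _ _)
    · set m := mex f c u v with hmdef
      have hρ2D := hD2 u v
      have hρle : ρ u v ≤ (3/4:ℝ)^(2*s) := by linarith
      have hdiv2s : 2*s ≤ m / k := by
        by_contra hcon
        push_neg at hcon
        have hstrict : (3/4:ℝ)^(2*s) < (3/4:ℝ)^(m/k) :=
          pow_lt_pow_right_of_lt_one₀ (by norm_num) (by norm_num) hcon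
        rw [hρdef, rho_ne f c k huv, ← hmdef] at hρle
        linarith
      have hmex2 : 2*(s*k) ≤ m := by
        calc 2*(s*k) = (2*s)*k := by ring
          _ ≤ (m/k)*k := Nat.mul_le_mul_right k hdiv2s
          _ ≤ m := Nat.div_mul_le_self _ _
      have hshift := mex_shift hc huv (M := s*k) hmex2
      have key : ∀ w z : X, w ≠ z → mex f c w z ≤ m - s*k →
          (4/3:ℝ)^s / 2 * D u v ≤ D w z := by
        intro w z hwz hmle
        have hexpineq : mex f c w z / k + s ≤ m / k := by
          have h1 : mex f c w z + s*k ≤ m := by omega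
          calc mex f c w z / k + s = (mex f c w z + s*k)/k :=
                (Nat.add_mul_div_right _ _ hkpos).symm
            _ ≤ m / k := Nat.div_le_div_right h1
        have h43 : (4/3:ℝ)^s * (3/4:ℝ)^s = 1 := by
          rw [← mul_pow]; norm_num
        have hpow : (4/3:ℝ)^s * (3/4:ℝ)^(m/k) ≤ (3/4:ℝ)^(mex f c w z / k) := by
          have h2 : (3/4:ℝ)^(m/k) ≤ (3/4:ℝ)^(mex f c w z / k + s) :=
            pow_le_pow_of_le_one (by norm_num) (by norm_num) hexpineq
          rw [pow_add] at h2
          have h5 := mul_le_mul_of_nonneg_left h2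
            (show (0:ℝ) ≤ (4/3:ℝ)^s by positivity)
          calc (4/3:ℝ)^s * (3/4:ℝ)^(m/k)
              ≤ (4/3:ℝ)^s * ((3/4:ℝ)^(mex f c w z / k) * (3/4:ℝ)^s) := h5
            _ = (3/4:ℝ)^(mex f c w z / k) * ((4/3:ℝ)^s * (3/4:ℝ)^s) := by ring
            _ = (3/4:ℝ)^(mex f c w z / k) := by rw [h43, mul_one]
        have hρuv : ρ u v = (3/4:ℝ)^(m/k) := by rw [hρdef, rho_ne f c k huv, ← hmdef]
        have hρwz : ρ w z = (3/4:ℝ)^(mex f c w z / k) := by rw [hρdef, rho_ne f c k hwz]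
        have hDwz := hD2 w z
        have hDuv := hDle u v
        have hc1 : (4/3:ℝ)^s * D u v ≤ (4/3:ℝ)^s * ρ u v :=
          mul_le_mul_of_nonneg_left hDuv (by positivity)
        rw [hρuv] at hc1
        rw [hρwz] at hDwz
        linarith
      rcases le_total (mex f c (iterZ f ((s*k:ℕ):ℤ) u) (iterZ f ((s*k:ℕ):ℤ) v))
          (mex f c (iterZ f (-((s*k:ℕ):ℤ)) u) (iterZ f (-((s*k:ℕ):ℤ)) v)) with hab | hab
      · apply le_max_of_le_left
        apply key _ _ (fun he => huv (iterZ_inj f _ he))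
        rw [min_eq_left hab] at hshift
        exact hshift
      · apply le_max_of_le_right
        apply key _ _ (fun he => huv (iterZ_inj f _ he))
        rw [min_eq_right hab] at hshift
        exact hshift
  refine ⟨D, hcompat, ?_⟩
  intro A hA
  obtain ⟨s, hs⟩ := pow_unbounded_of_one_lt (R := ℝ) (2*(A+1)) (by norm_num : (1:ℝ) < 4/3)
  have hΛs : A + 1 ≤ (4/3:ℝ)^s / 2 := by linarith
  have hspos : 0 < s := by
    rcases Nat.eq_zero_or_pos s with rfl | h
    · norm_num at hs; linarith
    · exact h
  have hNpos : 0 < s * k := Nat.mul_pos hspos hkpos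
  refine ⟨(3/4:ℝ)^(2*s)/2, by positivity, s*k, hNpos, ?_⟩
  intro x y hH
  set Λ : ℝ := A + 1 with hΛdef
  have hΛ2 : (2:ℝ) ≤ Λ := by rw [hΛdef]; linarith
  set g : ℕ → ℝ := fun i => D (iterZ f (i * (s*k)) x) (iterZ f (i * (s*k)) y) with hgdef
  have hgnn : ∀ i, 0 ≤ g i := fun i => hDnn _ _
  have hg00 : g 0 = D x y := by
    rw [hgdef]
    simp [iterZ_zero]
  -- the basic step relation
  have rel : ∀ i : ℕ, Λ * g i ≤ max (g (i+1))
      (D (iterZ f ((i:ℤ) * ((s*k : ℕ):ℤ) - ((s*k : ℕ):ℤ)) x)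
         (iterZ f ((i:ℤ) * ((s*k : ℕ):ℤ) - ((s*k : ℕ):ℤ)) y)) := by
    intro i
    have h1 := hyp s (iterZ f ((i:ℤ) * ((s*k : ℕ):ℤ)) x)
      (iterZ f ((i:ℤ) * ((s*k : ℕ):ℤ)) y) (hH i)
    simp only [iterZ_add] at h1
    have e1 : ((s*k : ℕ) : ℤ) + (i:ℤ) * ((s*k : ℕ):ℤ) = ((i+1 : ℕ):ℤ) * ((s*k : ℕ):ℤ) := by
      push_cast; ring
    have e2 : (-((s*k : ℕ) : ℤ)) + (i:ℤ) * ((s*k : ℕ):ℤ)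
        = (i:ℤ) * ((s*k : ℕ):ℤ) - ((s*k : ℕ):ℤ) := by ring
    rw [e1, e2] at h1
    have hgi : 0 ≤ g i := hgnn i
    calc Λ * g i ≤ (4/3:ℝ)^s/2 * g i := mul_le_mul_of_nonneg_right hΛs hgi
      _ ≤ _ := h1
  -- contraction along the orbit
  have cn : ∀ i : ℕ, Λ * g (i+1) ≤ g i := by
    by_contra hcon
    push_neg at hcon
    obtain ⟨i₀, hi₀⟩ := hcon
    have hg0 : 0 < g (i₀+1) := by
      by_contra h
      push_neg at h
      have h0 : g (i₀+1) = 0 := le_antisymm h (hgnn _)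
      rw [h0, mul_zero] at hi₀
      exact absurd hi₀ (not_lt.mpr (hgnn _))
    have hΛpos : (0:ℝ) < Λ := by linarith
    have grow : ∀ j : ℕ, Λ^j * g (i₀+1) ≤ g (i₀+1+j) ∧ g (i₀+j) < Λ * g (i₀+1+j) := by
      intro j
      induction j with
      | zero =>
        constructor
        · simp
        · simpa using hi₀
      | succ j ih =>
        obtain ⟨P1, P2⟩ := ih
        have hgipos : 0 < g (i₀+1+j) :=
          lt_of_lt_of_le (mul_pos (pow_pos hΛpos j) hg0) P1
        have hstep : Λ * g (i₀+1+j) ≤ g (i₀+1+j+1) := by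
          have hrel := rel (i₀+1+j)
          have eb : ((i₀+1+j : ℕ):ℤ) * ((s*k : ℕ):ℤ) - ((s*k : ℕ):ℤ)
              = ((i₀+j : ℕ):ℤ) * ((s*k : ℕ):ℤ) := by push_cast; ring
          rw [eb] at hrel
          by_contra hcon2
          push_neg at hcon2
          exact absurd hrel (not_le.mpr (max_lt hcon2 P2))
        constructor
        · calc Λ^(j+1) * g (i₀+1) = Λ * (Λ^j * g (i₀+1)) := by ring
            _ ≤ Λ * g (i₀+1+j) := mul_le_mul_of_nonneg_left P1 hΛpos.le
            _ ≤ g (i₀+1+(j+1)) := by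
                rw [show i₀+1+(j+1) = i₀+1+j+1 from by omega]
                exact hstep
        · rw [show i₀+(j+1) = i₀+1+j from by omega,
            show i₀+1+(j+1) = i₀+1+j+1 from by omega]
          have h5 : 2 * g (i₀+1+j) ≤ Λ * g (i₀+1+j) :=
            mul_le_mul_of_nonneg_right hΛ2 hgipos.le
          have h6 : 2 * (Λ * g (i₀+1+j)) ≤ Λ * (Λ * g (i₀+1+j)) :=
            mul_le_mul_of_nonneg_right hΛ2 (by positivity)
          have h7 : Λ * (Λ * g (i₀+1+j)) ≤ Λ * g (i₀+1+j+1) :=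
            mul_le_mul_of_nonneg_left hstep hΛpos.le
          linarith
    obtain ⟨j, hj⟩ := pow_unbounded_of_one_lt (R := ℝ)
      (((3/4:ℝ)^(2*s)/2) / g (i₀+1)) (by linarith : (1:ℝ) < Λ)
    have h1 := (grow j).1
    have h2 := hH (i₀+1+j)
    rw [div_lt_iff₀ hg0] at hj
    have h3 : g (i₀+1+j) ≤ (3/4:ℝ)^(2*s)/2 := h2
    linarith
  constructor
  · -- backward expansion
    have hrel0 := rel 0
    have e0 : ((0:ℕ):ℤ) * ((s*k : ℕ):ℤ) - ((s*k : ℕ):ℤ) = -((s*k : ℕ):ℤ) := by push_cast; ring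
    rw [e0] at hrel0
    set Dneg := D (iterZ f (-((s*k : ℕ):ℤ)) x) (iterZ f (-((s*k : ℕ):ℤ)) y) with hDneg
    rw [← hg00]
    by_cases hcmp : Λ * g 0 ≤ Dneg
    · have : A * g 0 ≤ Λ * g 0 :=
        mul_le_mul_of_nonneg_right (by rw [hΛdef]; linarith) (hgnn 0)
      linarith
    · push_neg at hcmp
      rcases le_max_iff.mp hrel0 with h | h
      · -- Λ g 0 ≤ g 1, combined with cn 0 forces g 0 = 0
        have hcn0 := cn 0
        have h5 : 2 * g 0 ≤ Λ * g 0 := mul_le_mul_of_nonneg_right hΛ2 (hgnn 0)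
        have h6 : 2 * (Λ * g 0) ≤ Λ * (Λ * g 0) :=
          mul_le_mul_of_nonneg_right hΛ2 (mul_nonneg (by linarith) (hgnn 0))
        have h7 : Λ * (Λ * g 0) ≤ Λ * g 1 := mul_le_mul_of_nonneg_left h (by linarith)
        have hg0z : g 0 ≤ 0 := by linarith
        have hg0e : g 0 = 0 := le_antisymm hg0z (hgnn 0)
        rw [hg0e, mul_zero]
        exact hDnn _ _
      · linarith
  · -- forward contraction
    intro i
    have hmono : ∀ i : ℕ, A^i * g i ≤ g 0 := by
      intro i
      induction i with
      | zero => simp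
      | succ i ih =>
        have h1 : A * g (i+1) ≤ Λ * g (i+1) :=
          mul_le_mul_of_nonneg_right (by rw [hΛdef]; linarith) (hgnn _)
        have h2 : A * g (i+1) ≤ g i := le_trans h1 (cn i)
        calc A^(i+1) * g (i+1) = A^i * (A * g (i+1)) := by ring
          _ ≤ A^i * g i := mul_le_mul_of_nonneg_left h2 (by positivity)
          _ ≤ g 0 := ih
    have hAi : (0:ℝ) < A^i := pow_pos (by linarith) i
    rw [← hg00]
    rw [inv_mul_eq_div, le_div_iff₀ hAi, mul_comm]
    exact hmono i
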